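/- Let Z be a real normed space and let D, E, D_k, E_k ⊆ Z (k ∈ ℕ) be subsets satisfying the fine approximation property: for each ξ ∈ D there is a sequence (ξ_k)_{k∈ℕ} with ξ_k ∈ D_k for all k and ‖ξ_k − ξ‖_Z → 0, and for each ζ ∈ E there is a sequence (ζ_k)_{k∈ℕ} with ζ_k ∈ E_k for all k and ‖ζ_k − ζ‖_Z → 0. Suppose (y, z) ∈ Z × Z is the data limit of some sequence (ŷ_n, ẑ_n) with (ŷ_n, ẑ_n) ∈ D × E for all n ∈ ℕ. Then there exists a sequence (y*_k, z*_k) with (y*_k, z*_k) ∈ D_k × E_k for all k ∈ ℕ such that (y, z) = Δ-lim_{k→∞} (y*_k, z*_k). -/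

import Mathlib

open Filter Topology

/-- Weak convergence of a sequence in a normed space: `f (y k) → f a` for every
continuous linear functional `f`. -/
def WeakConvergesTo {Z : Type*} [NormedAddCommGroup Z] [NormedSpace ℝ Z]
    (y : ℕ → Z) (a : Z) : Prop :=
  ∀ f : StrongDual ℝ Z, Tendsto (fun k => f (y k)) atTop (𝓝 (f a))

/-- Data convergence: `y_k ⇀ a`, `z_k ⇀ b`, and `y_k - z_k → a - b` strongly. -/
def DataConvergesTo {Z : Type*} [NormedAddCommGroup Z] [NormedSpace ℝ Z]
    (y z : ℕ → Z) (a b : Z) : Prop :=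
  WeakConvergesTo y a ∧ WeakConvergesTo z b ∧
    Tendsto (fun k => ‖(y k - z k) - (a - b)‖) atTop (𝓝 0)

/-- (DC1): every point of `D × E` is a data limit of a sequence of points of `D_k × E_k`. -/
def DC1 {Z : Type*} [NormedAddCommGroup Z] [NormedSpace ℝ Z]
    (D E : Set Z) (Dk Ek : ℕ → Set Z) : Prop :=
  ∀ a ∈ D, ∀ b ∈ E, ∃ y z : ℕ → Z,
    (∀ k, y k ∈ Dk k ∧ z k ∈ Ek k) ∧ DataConvergesTo y z a b

/-- (DC2): data limits of subsequences of points of `D_k × E_k` belong to `D × E`. -/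
def DC2 {Z : Type*} [NormedAddCommGroup Z] [NormedSpace ℝ Z]
    (D E : Set Z) (Dk Ek : ℕ → Set Z) : Prop :=
  ∀ kj : ℕ → ℕ, StrictMono kj → ∀ (y z : ℕ → Z) (a b : Z),
    (∀ j, y j ∈ Dk (kj j) ∧ z j ∈ Ek (kj j)) →
    DataConvergesTo y z a b → a ∈ D ∧ b ∈ E


/-- Auxiliary: strictly increasing thresholds dominating `K` from index 1 on. -/
def Kiter (K : ℕ → ℕ) : ℕ → ℕ
  | 0 => 0
  | n + 1 => max (Kiter K n + 1) (K (n + 1))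

/-- Under the fine approximation property of `D_k` for `D` and of `E_k`
for `E`, any data limit `(y, z)` of a sequence in `D × E` is also the data limit of a
sequence of points of `D_k × E_k`. -/
theorem statement2 {Z : Type*} [NormedAddCommGroup Z] [NormedSpace ℝ Z]
    (D E : Set Z) (Dk Ek : ℕ → Set Z)
    (hfineD : ∀ ξ ∈ D, ∃ ξk : ℕ → Z, (∀ k, ξk k ∈ Dk k) ∧
        Tendsto (fun k => ‖ξk k - ξ‖) atTop (𝓝 0))
    (hfineE : ∀ ζ ∈ E, ∃ ζk : ℕ → Z, (∀ k, ζk k ∈ Ek k) ∧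
        Tendsto (fun k => ‖ζk k - ζ‖) atTop (𝓝 0))
    (y z : Z) (yh zh : ℕ → Z)
    (hseq : ∀ n, yh n ∈ D ∧ zh n ∈ E)
    (hlim : DataConvergesTo yh zh y z) :
    ∃ ys zs : ℕ → Z, (∀ k, ys k ∈ Dk k ∧ zs k ∈ Ek k) ∧
      DataConvergesTo ys zs y z := by
  classical
  obtain ⟨hy, hz, hst⟩ := hlim
  choose ξ hξmem hξtend using fun n => hfineD (yh n) (hseq n).1
  choose ζ hζmem hζtend using fun n => hfineE (zh n) (hseq n).2
  have hK : ∀ n : ℕ, ∃ K : ℕ, ∀ k ≥ K,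
      ‖ξ n k - yh n‖ < 1 / (n + 1) ∧ ‖ζ n k - zh n‖ < 1 / (n + 1) := by
    intro n
    have hpos : (0 : ℝ) < 1 / (n + 1) := by positivity
    have h1 := (hξtend n).eventually (gt_mem_nhds hpos)
    have h2 := (hζtend n).eventually (gt_mem_nhds hpos)
    exact eventually_atTop.mp (h1.and h2)
  choose K hKspec using hK
  -- strictly increasing tail thresholds
  set K' : ℕ → ℕ := Kiter K with hK'def
  have hK'succ : ∀ n, K' (n + 1) = max (K' n + 1) (K (n + 1)) := fun n => rfl
  have hK'mono : StrictMono K' := by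
    apply strictMono_nat_of_lt_succ
    intro n
    rw [hK'succ]
    exact lt_of_lt_of_le (Nat.lt_succ_self _) (le_max_left _ _)
  have hK'ge : ∀ n, n ≤ K' n := fun n => hK'mono.le_apply
  have hKle : ∀ n, K (n + 1) ≤ K' (n + 1) := fun n => by rw [hK'succ]; exact le_max_right _ _
  -- the diagonal index
  let φ : ℕ → ℕ := fun k => Nat.findGreatest (fun n => K' n ≤ k) k
  have hφge : ∀ m k, K' m ≤ k → m ≤ φ k := by
    intro m k h
    exact Nat.le_findGreatest (le_trans (hK'ge m) h) h
  have hφspec : ∀ k, K' (φ k) ≤ k := by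
    intro k
    exact Nat.findGreatest_spec (P := fun n => K' n ≤ k) (Nat.zero_le k)
      (by simp [hK'def, Kiter])
  have hφtop : Tendsto φ atTop atTop := by
    apply tendsto_atTop.2
    intro m
    filter_upwards [eventually_ge_atTop (K' m)] with k hk
    exact hφge m k hk
  -- key bounds along the diagonal
  have hbound : ∀ k ≥ K' 1, ‖ξ (φ k) k - yh (φ k)‖ < 1 / (φ k + 1) ∧
      ‖ζ (φ k) k - zh (φ k)‖ < 1 / (φ k + 1) := by
    intro k hk
    have h1 : 1 ≤ φ k := hφge 1 k hk
    obtain ⟨m, hm⟩ : ∃ m, φ k = m + 1 := ⟨φ k - 1, by omega⟩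
    have hkK : K (φ k) ≤ k := by
      rw [hm]; exact le_trans (hKle m) (by rw [← hm]; exact hφspec k)
    exact hKspec (φ k) k hkK
  -- distance to diagonal shifted sequence tends to zero
  have hsmall : ∀ (u : ℕ → ℝ), (∀ k ≥ K' 1, u k < 1 / (φ k + 1)) → (∀ k, 0 ≤ u k) →
      Tendsto u atTop (𝓝 0) := by
    intro u hu hu0
    rw [Metric.tendsto_atTop]
    intro ε hε
    obtain ⟨n, hn⟩ := exists_nat_one_div_lt hε
    refine ⟨K' (n + 1), fun k hk => ?_⟩
    have h1 : K' 1 ≤ k := le_trans (hK'mono.monotone (by omega)) hk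
    have h2 : n + 1 ≤ φ k := hφge (n + 1) k hk
    have h3 : u k < 1 / (φ k + 1) := hu k h1
    have h4 : (1 : ℝ) / (φ k + 1) ≤ 1 / (n + 1) := by
      apply one_div_le_one_div_of_le (by positivity)
      exact_mod_cast by omega
    rw [Real.dist_eq, abs_of_nonneg (by linarith [hu0 k])]
    simp only [sub_zero]
    linarith
  have hdY : Tendsto (fun k => ‖ξ (φ k) k - yh (φ k)‖) atTop (𝓝 0) :=
    hsmall _ (fun k hk => (hbound k hk).1) (fun k => norm_nonneg _)
  have hdZ : Tendsto (fun k => ‖ζ (φ k) k - zh (φ k)‖) atTop (𝓝 0) :=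
    hsmall _ (fun k hk => (hbound k hk).2) (fun k => norm_nonneg _)
  refine ⟨fun k => ξ (φ k) k, fun k => ζ (φ k) k, fun k => ⟨hξmem _ k, hζmem _ k⟩, ?_, ?_, ?_⟩
  · intro f
    have h1 : Tendsto (fun k => f (yh (φ k))) atTop (𝓝 (f y)) := (hy f).comp hφtop
    have h2 : Tendsto (fun k => f (ξ (φ k) k - yh (φ k))) atTop (𝓝 0) := by
      refine squeeze_zero_norm (fun k => f.le_opNorm _) ?_
      simpa using hdY.const_mul ‖f‖
    have := h1.add h2
    simp only [add_zero] at this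
    convert this using 2 with k
    rw [map_sub]; ring
  · intro f
    have h1 : Tendsto (fun k => f (zh (φ k))) atTop (𝓝 (f z)) := (hz f).comp hφtop
    have h2 : Tendsto (fun k => f (ζ (φ k) k - zh (φ k))) atTop (𝓝 0) := by
      refine squeeze_zero_norm (fun k => f.le_opNorm _) ?_
      simpa using hdZ.const_mul ‖f‖
    have := h1.add h2
    simp only [add_zero] at this
    convert this using 2 with k
    rw [map_sub]; ring
  · have h3 : Tendsto (fun k => ‖(yh (φ k) - zh (φ k)) - (y - z)‖) atTop (𝓝 0) :=
      hst.comp hφtop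
    apply squeeze_zero (fun k => norm_nonneg _)
      (g := fun k => ‖ξ (φ k) k - yh (φ k)‖ + ‖ζ (φ k) k - zh (φ k)‖ +
        ‖(yh (φ k) - zh (φ k)) - (y - z)‖)
    · intro k
      have : (ξ (φ k) k - ζ (φ k) k) - (y - z) =
          (ξ (φ k) k - yh (φ k)) - (ζ (φ k) k - zh (φ k)) +
            ((yh (φ k) - zh (φ k)) - (y - z)) := by abel
      rw [this]
      calc _ ≤ ‖(ξ (φ k) k - yh (φ k)) - (ζ (φ k) k - zh (φ k))‖ +
            ‖(yh (φ k) - zh (φ k)) - (y - z)‖ := norm_add_le _ _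
        _ ≤ _ := by gcongr; exact norm_sub_le _ _
    · simpa using (hdY.add hdZ).add h3
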